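/- For all natural numbers n, i, j with i + j \le 2n - 1: \sum_{k=0}^{n} \binom{2n}{2k} \binom{2k}{i} \binom{2n-2k}{j} = \binom{2n}{i} \binom{2n-i}{j} 2^{2n-i-j-1}. -/

import Mathlib

open Finset

private lemma core_even (M : ℕ) (hM : 1 ≤ M) :
    ∑ t ∈ Finset.range (M + 1), (if Even t then M.choose t else 0) = 2 ^ (M - 1) := by
  have key : ∑ t ∈ Finset.range (M + 1), (((-1 : ℤ) ^ t + 1) * M.choose t) = 2 ^ M := by
    have h1 := Int.alternating_sum_range_choose_of_ne (n := M) (by omega)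
    have h2 : ((∑ t ∈ Finset.range (M + 1), M.choose t : ℕ) : ℤ) = 2 ^ M := by
      rw [Nat.sum_range_choose]; push_cast; ring
    push_cast at h2
    calc ∑ t ∈ Finset.range (M + 1), (((-1 : ℤ) ^ t + 1) * M.choose t)
        = ∑ t ∈ Finset.range (M + 1), ((-1 : ℤ) ^ t * M.choose t)
          + ∑ t ∈ Finset.range (M + 1), (M.choose t : ℤ) := by
          rw [← Finset.sum_add_distrib]; apply Finset.sum_congr rfl; intros; ring
      _ = 2 ^ M := by rw [h1, h2]; ring
  have key2 : (2 : ℤ) * ∑ t ∈ Finset.range (M + 1), (if Even t then (M.choose t : ℤ) else 0)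
      = 2 * 2 ^ (M - 1) := by
    rw [Finset.mul_sum]
    have : ∑ t ∈ Finset.range (M + 1), (2 * if Even t then (M.choose t : ℤ) else 0)
        = ∑ t ∈ Finset.range (M + 1), (((-1 : ℤ) ^ t + 1) * M.choose t) := by
      apply Finset.sum_congr rfl
      intro t _
      rcases Nat.even_or_odd t with ht | ht
      · rw [if_pos ht, ht.neg_one_pow]; ring
      · rw [if_neg (by simpa using ht), ht.neg_one_pow]; ring
    rw [this, key]
    rw [show (2:ℤ) * 2 ^ (M-1) = 2 ^ (M - 1 + 1) by rw [pow_succ]; ring]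
    congr 1; omega
  have cast_eq : ((∑ t ∈ Finset.range (M + 1), (if Even t then M.choose t else 0) : ℕ) : ℤ)
      = ∑ t ∈ Finset.range (M + 1), (if Even t then (M.choose t : ℤ) else 0) := by
    push_cast; apply Finset.sum_congr rfl; intro t _; split <;> simp
  have final : ((∑ t ∈ Finset.range (M + 1), (if Even t then M.choose t else 0) : ℕ) : ℤ)
      = 2 ^ (M - 1) :=
    mul_left_cancel₀ (by norm_num : (2:ℤ) ≠ 0) (by rw [cast_eq]; exact key2)
  exact_mod_cast final

private lemma core_odd (M : ℕ) (hM : 1 ≤ M) :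
    ∑ t ∈ Finset.range (M + 1), (if Even t then 0 else M.choose t) = 2 ^ (M - 1) := by
  have htot : ∑ t ∈ Finset.range (M + 1), (if Even t then M.choose t else 0)
      + ∑ t ∈ Finset.range (M + 1), (if Even t then 0 else M.choose t) = 2 ^ M := by
    rw [← Finset.sum_add_distrib]
    rw [← Nat.sum_range_choose M]
    apply Finset.sum_congr rfl; intro t _; split <;> simp
  have h2 : 2 ^ (M - 1) + 2 ^ (M - 1) = 2 ^ M := by
    rw [← two_mul, ← pow_succ']; congr 1; omega
  rw [core_even M hM] at htot
  omega

private lemma reidx_even (M N : ℕ) :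
    ∑ t ∈ Finset.range (2 * N), (if Even t then M.choose t else 0)
      = ∑ k ∈ Finset.range N, M.choose (2 * k) := by
  induction N with
  | zero => simp
  | succ N ih =>
    rw [show 2 * (N + 1) = 2 * N + 1 + 1 by ring, Finset.sum_range_succ,
      Finset.sum_range_succ, Finset.sum_range_succ, ih]
    simp [Nat.even_add_one, Nat.even_mul]

private lemma reidx_odd (M N : ℕ) :
    ∑ t ∈ Finset.range (2 * N), (if Even t then 0 else M.choose t)
      = ∑ k ∈ Finset.range N, M.choose (2 * k + 1) := by
  induction N with
  | zero => simp
  | succ N ih =>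
    rw [show 2 * (N + 1) = 2 * N + 1 + 1 by ring, Finset.sum_range_succ,
      Finset.sum_range_succ, Finset.sum_range_succ, ih]
    simp [Nat.even_add_one, Nat.even_mul]

private lemma sum_even_range (M N : ℕ) (hM : 1 ≤ M) (hN : M + 1 ≤ 2 * N) :
    ∑ k ∈ Finset.range N, M.choose (2 * k) = 2 ^ (M - 1) := by
  rw [← reidx_even M N]
  have hext : ∑ t ∈ Finset.range (2 * N), (if Even t then M.choose t else 0)
      = ∑ t ∈ Finset.range (M + 1), (if Even t then M.choose t else 0) := by
    rw [← Finset.sum_subset (Finset.range_subset_range.2 hN)]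
    intro t ht hnt
    simp only [Finset.mem_range] at ht hnt
    rw [Nat.choose_eq_zero_of_lt (by omega)]
    simp
  rw [hext, core_even M hM]

private lemma sum_odd_range (M N : ℕ) (hM : 1 ≤ M) (hN : M ≤ 2 * N) :
    ∑ k ∈ Finset.range N, M.choose (2 * k + 1) = 2 ^ (M - 1) := by
  rw [← reidx_odd M N]
  have hext : ∑ t ∈ Finset.range (2 * N), (if Even t then 0 else M.choose t)
      = ∑ t ∈ Finset.range (M + 1), (if Even t then 0 else M.choose t) := by
    rcases Nat.lt_or_ge (M + 1) (2 * N) with hc | hc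
    · rw [← Finset.sum_subset (Finset.range_subset_range.2 (le_of_lt hc))]
      intro t ht hnt
      simp only [Finset.mem_range] at ht hnt
      rw [Nat.choose_eq_zero_of_lt (by omega)]
      simp
    · have : 2 * N = M ∨ 2 * N = M + 1 := by omega
      rcases this with h' | h'
      · rw [Finset.sum_range_succ, ← h', if_pos (even_two_mul N), add_zero]
      · rw [h']
  rw [hext, core_odd M hM]

theorem sum_even_binomials (n i j : ℕ) (h : i + j + 1 ≤ 2 * n) :
    ∑ k ∈ Finset.range (n + 1),
        (2 * n).choose (2 * k) * (2 * k).choose i * (2 * n - 2 * k).choose j =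
      (2 * n).choose i * (2 * n - i).choose j * 2 ^ (2 * n - i - j - 1) := by
  have hM1 : 1 ≤ 2 * n - i - j := by omega
  have step : ∀ k ∈ Finset.range (n + 1),
      (2 * n).choose (2 * k) * (2 * k).choose i * (2 * n - 2 * k).choose j
        = (2 * n).choose i * (2 * n - i).choose j *
            (if i ≤ 2 * k then (2 * n - i - j).choose (2 * k - i) else 0) := by
    intro k hk
    simp only [Finset.mem_range] at hk
    have h2k : 2 * k ≤ 2 * n := by omega
    by_cases hik : i ≤ 2 * k
    · rw [if_pos hik]
      rw [Nat.choose_mul (n := 2 * n) hik]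
      by_cases hj : j ≤ 2 * n - 2 * k
      · have ht : 2 * k - i + j ≤ 2 * n - i := by omega
        have h1 : (2 * n - i).choose (2 * k - i + j) * (2 * k - i + j).choose (2 * k - i)
            = (2 * n - i).choose (2 * k - i) * (2 * n - i - (2 * k - i)).choose j := by
          have := Nat.choose_mul (n := 2 * n - i) (k := 2 * k - i + j) (s := 2 * k - i)
            (Nat.le_add_right _ _)
          simpa using this
        have h2 : (2 * n - i).choose (2 * k - i + j) * (2 * k - i + j).choose j
            = (2 * n - i).choose j * (2 * n - i - j).choose (2 * k - i) := by
          have := Nat.choose_mul (n := 2 * n - i) (k := 2 * k - i + j) (s := j)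
            (Nat.le_add_left _ _)
          simpa using this
        have hsub : 2 * n - i - (2 * k - i) = 2 * n - 2 * k := by omega
        have hsymm : (2 * k - i + j).choose (2 * k - i) = (2 * k - i + j).choose j := by
          rw [← Nat.choose_symm (Nat.le_add_right _ _)]
          congr 1; omega
        rw [hsub] at h1
        rw [hsymm] at h1
        rw [mul_assoc, ← h1, h2]
        ring
      · push_neg at hj
        rw [Nat.choose_eq_zero_of_lt hj, mul_zero]
        by_cases hj2 : j ≤ 2 * n - i
        · have hlt : 2 * n - i - j < 2 * k - i := by omega
          rw [Nat.choose_eq_zero_of_lt hlt]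
          ring
        · push_neg at hj2
          rw [Nat.choose_eq_zero_of_lt hj2]
          ring
    · rw [if_neg hik, Nat.choose_eq_zero_of_lt (show 2 * k < i by omega)]
      ring
  rw [Finset.sum_congr rfl step, ← Finset.mul_sum]
  congr 1
  rcases Nat.even_or_odd i with ⟨a, ha⟩ | ⟨a, ha⟩
  · -- i = 2a
    have han : a ≤ n := by omega
    obtain ⟨N', hN'⟩ : ∃ N', n + 1 = a + N' := ⟨n + 1 - a, by omega⟩
    have hshift : ∑ k ∈ Finset.range (n + 1),
          (if i ≤ 2 * k then (2 * n - i - j).choose (2 * k - i) else 0)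
        = ∑ k' ∈ Finset.range N', (2 * n - i - j).choose (2 * k') := by
      rw [hN', Finset.sum_range_add]
      have hz : ∑ k ∈ Finset.range a,
          (if i ≤ 2 * k then (2 * n - i - j).choose (2 * k - i) else 0) = 0 := by
        apply Finset.sum_eq_zero
        intro k hk
        simp only [Finset.mem_range] at hk
        rw [if_neg (by omega)]
      rw [hz, zero_add]
      apply Finset.sum_congr rfl
      intro k' _
      rw [if_pos (by omega)]
      congr 1; omega
    rw [hshift, sum_even_range (2 * n - i - j) N' hM1 (by omega)]
  · -- i = 2a+1
    obtain ⟨N', hN'⟩ : ∃ N', n + 1 = (a + 1) + N' := ⟨n - a, by omega⟩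
    have hshift : ∑ k ∈ Finset.range (n + 1),
          (if i ≤ 2 * k then (2 * n - i - j).choose (2 * k - i) else 0)
        = ∑ k' ∈ Finset.range N', (2 * n - i - j).choose (2 * k' + 1) := by
      rw [hN', Finset.sum_range_add]
      have hz : ∑ k ∈ Finset.range (a + 1),
          (if i ≤ 2 * k then (2 * n - i - j).choose (2 * k - i) else 0) = 0 := by
        apply Finset.sum_eq_zero
        intro k hk
        simp only [Finset.mem_range] at hk
        rw [if_neg (by omega)]
      rw [hz, zero_add]
      apply Finset.sum_congr rfl
      intro k' _
      rw [if_pos (by omega)]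
      congr 1; omega
    rw [hshift, sum_odd_range (2 * n - i - j) N' hM1 (by omega)]
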